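/- For every integer k ≥ 2 there exists an integer N (depending on k) such that for all n ≥ N the following holds: if G is a connected simple graph on n vertices with diameter d satisfying d < 2n/(3(k+2)), then S_k(D(G)) < S_k(D(P_n)), where P_n is the path on n vertices. -/

import Mathlib

open Finset SimpleGraph

/-- The distance matrix of a simple graph on `Fin n`, as a real matrix: the
`(i,j)` entry is the graph distance `d_G(i,j)`. -/
noncomputable def distMatrix {n : ℕ} (G : SimpleGraph (Fin n)) :
    Matrix (Fin n) (Fin n) ℝ :=
  fun i j => (G.dist i j : ℝ)

/-- The eigenvalues of the distance matrix, listed in decreasing order. -/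
noncomputable def distEigList {n : ℕ} (G : SimpleGraph (Fin n)) : List ℝ :=
  if h : (distMatrix G).IsHermitian then
    (List.ofFn h.eigenvalues).insertionSort (· ≥ ·)
  else []

/-- `distEig G k` is the `k`-th largest distance eigenvalue `λ_k(D(G))` (`1`-indexed). -/
noncomputable def distEig {n : ℕ} (G : SimpleGraph (Fin n)) (k : ℕ) : ℝ :=
  (distEigList G).getD (k - 1) 0

/-- `S_k(D(G))`, the sum of the `k` largest distance eigenvalues. -/
noncomputable def distEigSum {n : ℕ} (G : SimpleGraph (Fin n)) (k : ℕ) : ℝ :=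
  ((distEigList G).take k).sum

/-- `G` has independence number at most `s`: every set of pairwise
nonadjacent vertices has at most `s` elements. -/
def IndepNumLE {V : Type*} (G : SimpleGraph V) (s : ℕ) : Prop :=
  ∀ S : Finset V, (∀ u ∈ S, ∀ v ∈ S, u ≠ v → ¬ G.Adj u v) → S.card ≤ s

/-! ### Auxiliary lemmas -/

section Aux

open Matrix

lemma list_sum_take_eq {L : List ℝ} {k : ℕ} (hk : k ≤ L.length) :
    (L.take k).sum = ∑ i ∈ range k, L.getD i 0 := by
  induction k with
  | zero => simp
  | succ m ih =>
      have hm : m < L.length := hk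
      rw [List.sum_take_succ L m hm, Finset.sum_range_succ, ih (le_of_lt hm),
        List.getD_eq_getElem L 0 hm]

lemma list_sum_map_getD (L : List ℝ) (f : ℝ → ℝ) :
    (L.map f).sum = ∑ i ∈ range L.length, f (L.getD i 0) := by
  have hlen : (L.map f).length = L.length := by simp
  rw [← List.take_length (l := L.map f), hlen, list_sum_take_eq (by rw [hlen])]
  refine Finset.sum_congr rfl (fun i hi => ?_)
  have hi' : i < L.length := Finset.mem_range.mp hi
  rw [List.getD_eq_getElem _ 0 (by simpa using hi'), List.getElem_map,
    List.getD_eq_getElem L 0 hi']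

lemma sum_mul_le_sum_take {n k : ℕ} (lam : Fin n → ℝ) (c : Fin n → ℝ)
    (hc0 : ∀ i, 0 ≤ c i) (hc1 : ∀ i, c i ≤ 1) (hsum : ∑ i, c i = k)
    (hk1 : 1 ≤ k) (hkn : k ≤ n) :
    ∑ i, lam i * c i ≤ (((List.ofFn lam).insertionSort (· ≥ ·)).take k).sum := by
  set L := (List.ofFn lam).insertionSort (· ≥ ·) with hL
  have hperm : L.Perm (List.ofFn lam) := List.perm_insertionSort _ _
  have hlen : L.length = n := by
    rw [hperm.length_eq, List.length_ofFn]
  have hsorted : L.Pairwise (· ≥ ·) := List.pairwise_insertionSort _ _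
  have hkL : k ≤ L.length := hlen ▸ hkn
  set t : ℝ := L.getD (k-1) 0 with ht
  have hget : ∀ i (h : i < L.length), L.getD i 0 = L.get ⟨i, h⟩ := by
    intro i h; rw [List.getD_eq_getElem L 0 h]; simp
  have key1 : ∀ i, i < k → t ≤ L.getD i 0 := by
    intro i hi
    have h1 : i < L.length := lt_of_lt_of_le hi hkL
    have h2 : k - 1 < L.length := lt_of_lt_of_le (by omega) hkL
    rw [hget i h1, ht, hget (k-1) h2]
    exact hsorted.rel_get_of_le (by simp [Fin.le_def]; omega)
  have key2 : ∀ i, k ≤ i → (h : i < L.length) → L.getD i 0 ≤ t := by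
    intro i hik h
    have h2 : k - 1 < L.length := lt_of_lt_of_le (by omega) hkL
    rw [hget i h, ht, hget (k-1) h2]
    exact hsorted.rel_get_of_le (by simp [Fin.le_def]; omega)
  have hmaps : ∑ i, max (lam i - t) 0 = ∑ i ∈ range n, max (L.getD i 0 - t) 0 := by
    have p2 : (L.map (fun x => max (x - t) 0)).Perm
        ((List.ofFn lam).map (fun x => max (x - t) 0)) := hperm.map _
    have e1 : ((List.ofFn lam).map (fun x => max (x - t) 0)).sum = ∑ i, max (lam i - t) 0 := by
      rw [List.map_ofFn, List.sum_ofFn]; rfl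
    have e2 : (L.map (fun x => max (x - t) 0)).sum
        = ∑ i ∈ range n, max (L.getD i 0 - t) 0 := by
      rw [list_sum_map_getD, hlen]
    rw [← e1, ← p2.sum_eq, e2]
  have step1 : ∑ i, (lam i - t) * c i ≤ ∑ i, max (lam i - t) 0 := by
    refine Finset.sum_le_sum (fun i _ => ?_)
    rcases le_or_gt t (lam i) with h | h
    · calc (lam i - t) * c i ≤ (lam i - t) * 1 :=
            mul_le_mul_of_nonneg_left (hc1 i) (by linarith)
        _ ≤ max (lam i - t) 0 := by rw [mul_one]; exact le_max_left _ _
    · calc (lam i - t) * c i ≤ 0 := mul_nonpos_of_nonpos_of_nonneg (by linarith) (hc0 i)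
        _ ≤ max (lam i - t) 0 := le_max_right _ _
  have step2 : ∑ i ∈ range n, max (L.getD i 0 - t) 0
      = ∑ i ∈ range k, (L.getD i 0 - t) := by
    rw [Finset.range_eq_Ico, ← Finset.sum_Ico_consecutive _ (Nat.zero_le k) hkn]
    have ha : ∑ i ∈ Finset.Ico 0 k, max (L.getD i 0 - t) 0
        = ∑ i ∈ Finset.Ico 0 k, (L.getD i 0 - t) := by
      refine Finset.sum_congr rfl (fun i hi => ?_)
      have := key1 i (Finset.mem_Ico.mp hi).2
      exact max_eq_left (by linarith)
    have hb : ∑ i ∈ Finset.Ico k n, max (L.getD i 0 - t) 0 = 0 := by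
      refine Finset.sum_eq_zero (fun i hi => ?_)
      obtain ⟨h1, h2⟩ := Finset.mem_Ico.mp hi
      have := key2 i h1 (by rw [hlen]; exact h2)
      exact max_eq_right (by linarith)
    rw [ha, hb, add_zero, Finset.range_eq_Ico]
  have hfin : ∑ i, lam i * c i
      = ∑ i, (lam i - t) * c i + t * (∑ i, c i) := by
    rw [Finset.mul_sum, ← Finset.sum_add_distrib]
    refine Finset.sum_congr rfl (fun i _ => by ring)
  rw [hfin, hsum, list_sum_take_eq hkL]
  have hsub : ∑ i ∈ range k, (L.getD i 0 - t) = (∑ i ∈ range k, L.getD i 0) - k * t := by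
    rw [Finset.sum_sub_distrib]; simp [mul_comm]
  calc ∑ i, (lam i - t) * c i + t * k
      ≤ ∑ i, max (lam i - t) 0 + t * k := by linarith
    _ = ∑ i ∈ range k, (L.getD i 0 - t) + t * k := by rw [hmaps, step2]
    _ = ∑ i ∈ range k, L.getD i 0 := by rw [hsub]; ring

lemma distMatrix_isHermitian {n : ℕ} (G : SimpleGraph (Fin n)) :
    (distMatrix G).IsHermitian := by
  ext i j
  simp [Matrix.conjTranspose_apply, distMatrix, SimpleGraph.dist_comm]

lemma spectral_real {n : ℕ} {A : Matrix (Fin n) (Fin n) ℝ} (hA : A.IsHermitian) :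
    A = (hA.eigenvectorUnitary : Matrix (Fin n) (Fin n) ℝ) * Matrix.diagonal hA.eigenvalues
      * (hA.eigenvectorUnitary : Matrix (Fin n) (Fin n) ℝ)ᴴ := by
  have := hA.spectral_theorem
  rw [RCLike.ofReal_real_eq_id] at this
  simpa [Matrix.star_eq_conjTranspose] using this

/-- Ky Fan's maximum principle (one direction). -/
lemma kyFan {n : ℕ} {A : Matrix (Fin n) (Fin n) ℝ} (hA : A.IsHermitian) {k : ℕ}
    (hk1 : 1 ≤ k) (hkn : k ≤ n) (W : Matrix (Fin n) (Fin k) ℝ) (hW : Wᴴ * W = 1) :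
    (Wᴴ * A * W).trace ≤
      (((List.ofFn hA.eigenvalues).insertionSort (· ≥ ·)).take k).sum := by
  set U : Matrix (Fin n) (Fin n) ℝ := (hA.eigenvectorUnitary : Matrix (Fin n) (Fin n) ℝ) with hU
  have hU1 : U * Uᴴ = 1 := by
    rw [← Matrix.star_eq_conjTranspose]
    exact Matrix.mem_unitaryGroup_iff.mp hA.eigenvectorUnitary.2
  set M : Matrix (Fin n) (Fin k) ℝ := Uᴴ * W with hM
  have hMM : Mᴴ * M = 1 := by
    rw [hM, Matrix.conjTranspose_mul, Matrix.conjTranspose_conjTranspose,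
      Matrix.mul_assoc, ← Matrix.mul_assoc U, hU1, Matrix.one_mul, hW]
  set P : Matrix (Fin n) (Fin n) ℝ := M * Mᴴ with hP
  have hPP : P * P = P := by
    rw [hP, Matrix.mul_assoc, ← Matrix.mul_assoc Mᴴ, hMM, Matrix.one_mul]
  have hPsymm : ∀ i j, P i j = P j i := by
    intro i j
    have hPh : Pᴴ = P := by
      rw [hP, Matrix.conjTranspose_mul, Matrix.conjTranspose_conjTranspose]
    have h := congr_fun (congr_fun hPh i) j
    simpa [Matrix.conjTranspose_apply] using h.symm
  have hc0 : ∀ i, 0 ≤ P i i := by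
    intro i
    rw [hP, Matrix.mul_apply]
    refine Finset.sum_nonneg (fun j _ => ?_)
    rw [Matrix.conjTranspose_apply]
    simp only [star_trivial]
    exact mul_self_nonneg _
  have hc1 : ∀ i, P i i ≤ 1 := by
    intro i
    have h1 : P i i = ∑ j, (P i j)^2 := by
      conv_lhs => rw [← hPP]
      rw [Matrix.mul_apply]
      refine Finset.sum_congr rfl (fun j _ => ?_)
      rw [hPsymm j i]; ring
    have h2 : (P i i)^2 ≤ ∑ j, (P i j)^2 :=
      Finset.single_le_sum (f := fun j => (P i j)^2)
        (fun j _ => sq_nonneg _) (Finset.mem_univ i)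
    nlinarith [hc0 i, h1, h2]
  have hsum : ∑ i, P i i = (k : ℝ) := by
    have h : (M * Mᴴ).trace = (k : ℝ) := by
      rw [Matrix.trace_mul_comm, hMM, Matrix.trace_one]
      simp
    simpa [Matrix.trace, Matrix.diag, hP] using h
  have htrace : (Wᴴ * A * W).trace = ∑ i, hA.eigenvalues i * P i i := by
    have hspec := spectral_real hA
    have e1 : Wᴴ * A * W = Mᴴ * Matrix.diagonal hA.eigenvalues * M := by
      conv_lhs => rw [hspec]
      simp only [hM, Matrix.conjTranspose_mul, Matrix.conjTranspose_conjTranspose,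
        Matrix.mul_assoc, hU]
    rw [e1, Matrix.mul_assoc,
      Matrix.trace_mul_comm (Mᴴ) (Matrix.diagonal hA.eigenvalues * M),
      Matrix.mul_assoc, ← hP]
    simp [Matrix.trace, Matrix.diag, Matrix.diagonal_mul]
  rw [htrace]
  exact sum_mul_le_sum_take _ _ hc0 hc1 hsum hk1 hkn

lemma sq_sum_eigen {n : ℕ} {A : Matrix (Fin n) (Fin n) ℝ} (hA : A.IsHermitian) :
    ∑ i, hA.eigenvalues i ^ 2 = ∑ i, ∑ j, (A i j)^2 := by
  set U : Matrix (Fin n) (Fin n) ℝ := (hA.eigenvectorUnitary : Matrix (Fin n) (Fin n) ℝ) with hU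
  have hU2 : Uᴴ * U = 1 := by
    rw [← Matrix.star_eq_conjTranspose]
    exact Matrix.mem_unitaryGroup_iff'.mp hA.eigenvectorUnitary.2
  have hspec := spectral_real hA
  have h1 : (A * A).trace = ∑ i, hA.eigenvalues i ^ 2 := by
    have hmm : A * A = U * (Matrix.diagonal hA.eigenvalues * Matrix.diagonal hA.eigenvalues) * Uᴴ := by
      conv_lhs => rw [hspec]
      rw [← hU]
      calc U * Matrix.diagonal hA.eigenvalues * Uᴴ * (U * Matrix.diagonal hA.eigenvalues * Uᴴ)
          = U * Matrix.diagonal hA.eigenvalues * (Uᴴ * U) * Matrix.diagonal hA.eigenvalues * Uᴴ := by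
            simp only [Matrix.mul_assoc]
        _ = U * (Matrix.diagonal hA.eigenvalues * Matrix.diagonal hA.eigenvalues) * Uᴴ := by
            rw [hU2]; simp only [Matrix.mul_one, Matrix.mul_assoc]
    rw [hmm, Matrix.trace_mul_cycle, ← Matrix.mul_assoc, hU2, Matrix.one_mul,
      Matrix.diagonal_mul_diagonal, Matrix.trace_diagonal]
    refine Finset.sum_congr rfl (fun i _ => by ring)
  have h2 : (A * A).trace = ∑ i, ∑ j, (A i j)^2 := by
    rw [Matrix.trace]
    refine Finset.sum_congr rfl (fun i _ => ?_)
    rw [Matrix.diag, Matrix.mul_apply]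
    refine Finset.sum_congr rfl (fun j _ => ?_)
    have hsym : A j i = A i j := by
      have h := congr_fun (congr_fun hA i) j
      simpa [Matrix.conjTranspose_apply] using h
    rw [hsym]; ring
  rw [← h1, h2]

lemma distEigList_eq {n : ℕ} (G : SimpleGraph (Fin n)) :
    distEigList G
      = (List.ofFn (distMatrix_isHermitian G).eigenvalues).insertionSort (· ≥ ·) := by
  exact dif_pos (distMatrix_isHermitian G)

lemma dist_le_diam_of_connected {n : ℕ} {G : SimpleGraph (Fin n)} (hG : G.Connected)
    (u v : Fin n) : G.dist u v ≤ G.diam := by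
  refine SimpleGraph.dist_le_diam ?_
  have hle : G.ediam ≤ (n : ℕ∞) := by
    refine SimpleGraph.ediam_le_of_edist_le fun a b => ?_
    obtain ⟨p⟩ := hG.preconnected a b
    calc G.edist a b ≤ ((p.toPath : G.Walk a b).length : ℕ∞) := SimpleGraph.edist_le _
      _ ≤ (n : ℕ∞) := by
          have := SimpleGraph.Walk.IsPath.length_lt (p.toPath.2)
          rw [Fintype.card_fin] at this
          exact_mod_cast le_of_lt this
  exact ne_top_of_le_ne_top (by simp) hle

/-- Upper bound: `S_k(D(G)) ≤ √k · n · diam G`. -/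
lemma distEigSum_le_sqrt {n k : ℕ} (G : SimpleGraph (Fin n)) (hG : G.Connected)
    (hk1 : 1 ≤ k) (hkn : k ≤ n) :
    distEigSum G k ≤ Real.sqrt k * ((n : ℝ) * G.diam) := by
  have hH := distMatrix_isHermitian G
  set L := distEigList G with hLdef
  have hLeq : L = (List.ofFn hH.eigenvalues).insertionSort (· ≥ ·) := distEigList_eq G
  have hperm : L.Perm (List.ofFn hH.eigenvalues) := hLeq ▸ List.perm_insertionSort _ _
  have hlen : L.length = n := by rw [hperm.length_eq, List.length_ofFn]
  have hS : distEigSum G k = ∑ i ∈ range k, L.getD i 0 := by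
    rw [distEigSum, ← hLdef, list_sum_take_eq (by omega)]
  have hQ3 : ∑ i ∈ range n, (L.getD i 0)^2 = ∑ i, hH.eigenvalues i ^ 2 := by
    have p2 : (L.map (fun x => x^2)).Perm
        ((List.ofFn hH.eigenvalues).map (fun x => x^2)) := hperm.map _
    have e1 : ((List.ofFn hH.eigenvalues).map (fun x => x^2)).sum
        = ∑ i, hH.eigenvalues i ^ 2 := by
      rw [List.map_ofFn, List.sum_ofFn]; rfl
    have e2 : (L.map (fun x => x^2)).sum = ∑ i ∈ range n, (L.getD i 0)^2 := by
      rw [list_sum_map_getD, hlen]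
    rw [← e2, p2.sum_eq, e1]
  have hd0 : (0 : ℝ) ≤ (G.diam : ℝ) := Nat.cast_nonneg _
  have hQ4 : ∑ i, hH.eigenvalues i ^ 2 ≤ ((n : ℝ) * G.diam)^2 := by
    rw [sq_sum_eigen hH]
    have hcard : ((n : ℝ) * G.diam)^2 = ∑ _i : Fin n, ∑ _j : Fin n, ((G.diam : ℝ))^2 := by
      simp [Finset.sum_const, Fintype.card_fin]; ring
    rw [hcard]
    refine Finset.sum_le_sum (fun i _ => Finset.sum_le_sum (fun j _ => ?_))
    have h1 : (0:ℝ) ≤ distMatrix G i j := Nat.cast_nonneg _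
    have h2 : distMatrix G i j ≤ (G.diam : ℝ) := by
      show ((G.dist i j : ℝ)) ≤ (G.diam : ℝ)
      exact_mod_cast dist_le_diam_of_connected hG i j
    nlinarith
  have hQ : (∑ i ∈ range k, L.getD i 0)^2 ≤ k * ∑ i ∈ range k, (L.getD i 0)^2 := by
    have h := Finset.sum_mul_sq_le_sq_mul_sq (range k) (fun _ => (1:ℝ)) (fun i => L.getD i 0)
    simpa [Finset.card_range] using h
  have hQ2 : ∑ i ∈ range k, (L.getD i 0)^2 ≤ ∑ i ∈ range n, (L.getD i 0)^2 :=
    Finset.sum_le_sum_of_subset_of_nonneg (Finset.range_subset_range.mpr hkn)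
      (fun i _ _ => sq_nonneg _)
  rw [hS]
  rcases le_or_gt (∑ i ∈ range k, L.getD i 0) 0 with h | h
  · exact h.trans (by positivity)
  · have hb : (∑ i ∈ range k, L.getD i 0)^2 ≤ (k : ℝ) * ((n : ℝ) * G.diam)^2 := by
      calc (∑ i ∈ range k, L.getD i 0)^2 ≤ k * ∑ i ∈ range k, (L.getD i 0)^2 := hQ
        _ ≤ k * ((n : ℝ) * G.diam)^2 := by
            have := hQ2.trans (le_of_eq hQ3) |>.trans hQ4
            exact mul_le_mul_of_nonneg_left this (Nat.cast_nonneg _)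
    have := Real.sqrt_le_sqrt hb
    rw [Real.sqrt_sq h.le, Real.sqrt_mul (Nat.cast_nonneg _), Real.sqrt_sq (by positivity)]
      at this
    exact this


lemma natdist_le_pathdist {n : ℕ} (u v : Fin n) :
    Nat.dist u.val v.val ≤ (pathGraph n).dist u v := by
  have hn0 : 0 < n := u.pos
  obtain ⟨m, rfl⟩ : ∃ m, n = m + 1 := ⟨n - 1, by omega⟩
  have hconn := SimpleGraph.pathGraph_connected m
  obtain ⟨p, hp⟩ := (hconn.preconnected u v).exists_walk_length_eq_dist
  rw [← hp]
  clear hp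
  induction p with
  | nil => simp
  | @cons a b c h q ih =>
      have h1 : Nat.dist a.val b.val = 1 := by
        rcases SimpleGraph.pathGraph_adj.mp h with h' | h' <;>
          (simp only [Nat.dist]; omega)
      calc Nat.dist a.val c.val ≤ Nat.dist a.val b.val + Nat.dist b.val c.val :=
            Nat.dist.triangle_inequality _ _ _
        _ ≤ 1 + q.length := by
            have := ih
            omega
        _ = (SimpleGraph.Walk.cons h q).length := by
            rw [SimpleGraph.Walk.length_cons]; ring

lemma natdist_sum (n : ℕ) :
    3 * (∑ i ∈ range n, ∑ j ∈ range n, Nat.dist i j) + n = n ^ 3 := by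
  induction n with
  | zero => simp
  | succ m ih =>
    have hrow : ∑ j ∈ range m, Nat.dist m j = ∑ j ∈ range m, (j + 1) := by
      rw [← Finset.sum_range_reflect (fun j => j + 1) m]
      refine Finset.sum_congr rfl fun j hj => ?_
      have hj' := Finset.mem_range.mp hj
      simp only [Nat.dist]; omega
    have gauss : (∑ i ∈ range m, i) * 2 = m * (m - 1) := Finset.sum_range_id_mul_two m
    have hmm : m * (m - 1) + 2 * m = m * m + m := by
      cases m with
      | zero => simp
      | succ p => simp only [Nat.succ_sub_one]; ring
    have hrowval : 2 * (∑ j ∈ range m, Nat.dist m j) = m * m + m := by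
      rw [hrow, Finset.sum_add_distrib, Finset.sum_const, Finset.card_range, smul_eq_mul,
        mul_one]
      omega
    have hin : ∑ i ∈ range (m+1), ∑ j ∈ range (m+1), Nat.dist i j
        = (∑ i ∈ range m, ∑ j ∈ range m, Nat.dist i j)
          + 2 * (∑ j ∈ range m, Nat.dist m j) := by
      rw [Finset.sum_range_succ]
      have e1 : ∑ i ∈ range m, ∑ j ∈ range (m+1), Nat.dist i j
          = (∑ i ∈ range m, ∑ j ∈ range m, Nat.dist i j) + ∑ i ∈ range m, Nat.dist i m := by
        rw [← Finset.sum_add_distrib]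
        exact Finset.sum_congr rfl fun i _ => Finset.sum_range_succ _ _
      have e2 : ∑ j ∈ range (m+1), Nat.dist m j = ∑ j ∈ range m, Nat.dist m j := by
        rw [Finset.sum_range_succ, Nat.dist_self, add_zero]
      have e3 : ∑ i ∈ range m, Nat.dist i m = ∑ j ∈ range m, Nat.dist m j :=
        Finset.sum_congr rfl fun i _ => Nat.dist_comm i m
      rw [e1, e2, e3]; ring
    rw [hin]
    zify at ih hrowval ⊢
    linear_combination ih + 3 * hrowval

/-- Lower bound for the path: `S_k(D(P_n)) ≥ (n²-1)/3 - (k-1)`. -/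
lemma path_lower {n k : ℕ} (hk1 : 1 ≤ k) (hkn : 2 * k ≤ n) :
    ((n : ℝ)^2 - 1)/3 - ((k : ℝ) - 1) ≤ distEigSum (pathGraph n) k := by
  have hn : 0 < n := by omega
  have hH := distMatrix_isHermitian (pathGraph n)
  set D := distMatrix (pathGraph n) with hD
  set s : ℝ := (Real.sqrt 2)⁻¹ with hs
  set r : ℝ := (Real.sqrt n)⁻¹ with hr
  have hss : s * s = 2⁻¹ := by
    rw [hs, ← mul_inv, Real.mul_self_sqrt (by norm_num)]
  have hrr : r * r = (n : ℝ)⁻¹ := by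
    rw [hr, ← mul_inv, Real.mul_self_sqrt (Nat.cast_nonneg n)]
  set W : Matrix (Fin n) (Fin k) ℝ := fun i j =>
    if j.val = 0 then r
    else if i.val = 2 * j.val - 2 then s
    else if i.val = 2 * j.val - 1 then -s
    else 0 with hWdef
  have hidx : ∀ j : Fin k, 2 * j.val - 2 < n ∧ 2 * j.val - 1 < n := by
    intro j
    have := j.isLt
    omega
  have hWval0 : ∀ (i : Fin n) (j : Fin k), j.val = 0 → W i j = r := by
    intro i j hj
    simp only [hWdef]
    rw [if_pos hj]
  have hWval : ∀ (i : Fin n) (j : Fin k), j.val ≠ 0 →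
      W i j = if i.val = 2 * j.val - 2 then s
        else if i.val = 2 * j.val - 1 then -s else 0 := by
    intro i j hj
    simp only [hWdef]
    rw [if_neg hj]
  have hdec : ∀ (j : Fin k), j.val ≠ 0 → ∀ (g : Fin n → ℝ),
      ∑ i, W i j * g i
        = s * g ⟨2 * j.val - 2, (hidx j).1⟩ - s * g ⟨2 * j.val - 1, (hidx j).2⟩ := by
    intro j hj g
    set a : Fin n := ⟨2 * j.val - 2, (hidx j).1⟩ with ha
    set b : Fin n := ⟨2 * j.val - 1, (hidx j).2⟩ with hb
    have hjv : 1 ≤ j.val := by omega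
    have hab : a ≠ b := by
      simp only [ha, hb, ne_eq, Fin.mk.injEq]
      omega
    have hsplit : ∀ i, W i j * g i
        = (if i = a then s * g i else 0) + (if i = b then (-s) * g i else 0) := by
      intro i
      by_cases h1 : i = a
      · rw [if_pos h1, if_neg (by rw [h1]; exact hab), hWval i j hj,
          if_pos (by rw [h1])]
        ring
      · by_cases h2 : i = b
        · rw [if_neg h1, if_pos h2, hWval i j hj,
            if_neg (by rw [h2]; simp [hb]; omega), if_pos (by rw [h2])]
          ring
        · have hv1 : i.val ≠ 2 * j.val - 2 := by
            intro hc; exact h1 (Fin.ext (by simp [ha, hc]))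
          have hv2 : i.val ≠ 2 * j.val - 1 := by
            intro hc; exact h2 (Fin.ext (by simp [hb, hc]))
          rw [if_neg h1, if_neg h2, hWval i j hj, if_neg hv1, if_neg hv2]
          ring
    rw [Finset.sum_congr rfl (fun i _ => hsplit i), Finset.sum_add_distrib,
      Finset.sum_ite_eq' univ a (fun i => s * g i),
      Finset.sum_ite_eq' univ b (fun i => (-s) * g i)]
    simp only [Finset.mem_univ, if_pos]
    ring
  have hWorth : Wᴴ * W = 1 := by
    ext j j'
    rw [Matrix.mul_apply, Matrix.one_apply]
    have hentry : ∀ i, Wᴴ j i * W i j' = W i j * W i j' := by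
      intro i; rw [Matrix.conjTranspose_apply, star_trivial]
    rw [Finset.sum_congr rfl fun i _ => hentry i]
    by_cases h0 : j.val = 0
    · by_cases h0' : j'.val = 0
      · have hjj : j = j' := Fin.ext (h0.trans h0'.symm)
        rw [if_pos hjj]
        have hcv : ∀ i : Fin n, W i j * W i j' = r * r := by
          intro i; rw [hWval0 i j h0, hWval0 i j' h0']
        rw [Finset.sum_congr rfl fun i _ => hcv i, Finset.sum_const, Finset.card_univ,
          Fintype.card_fin, nsmul_eq_mul, hrr]
        field_simp
      · have hne : j ≠ j' := fun h => h0' (h ▸ h0)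
        rw [if_neg hne]
        have hcv : ∑ i, W i j * W i j' = ∑ i, W i j' * (fun _ : Fin n => r) i := by
          refine Finset.sum_congr rfl fun i _ => ?_
          rw [hWval0 i j h0]; ring
        rw [hcv, hdec j' h0' (fun _ => r)]
        ring
    · by_cases h0' : j'.val = 0
      · have hne : j ≠ j' := fun h => h0 (h ▸ h0')
        rw [if_neg hne]
        have hcv : ∑ i, W i j * W i j' = ∑ i, W i j * (fun _ : Fin n => r) i := by
          refine Finset.sum_congr rfl fun i _ => ?_
          rw [hWval0 i j' h0']
        rw [hcv, hdec j h0 (fun _ => r)]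
        ring
      · rw [hdec j h0 (fun i => W i j')]
        by_cases hjj : j = j'
        · subst hjj
          rw [if_pos rfl]
          have hv1 : W ⟨2 * j.val - 2, (hidx j).1⟩ j = s := by
            rw [hWval _ j h0, if_pos (by simp)]
          have hv2 : W ⟨2 * j.val - 1, (hidx j).2⟩ j = -s := by
            rw [hWval _ j h0, if_neg (by simp; omega), if_pos (by simp)]
          rw [hv1, hv2]
          linear_combination (2:ℝ) * hss
        · rw [if_neg hjj]
          have hvv : j.val ≠ j'.val := fun h => hjj (Fin.ext h)
          have hz1 : W ⟨2 * j.val - 2, (hidx j).1⟩ j' = 0 := by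
            rw [hWval _ j' h0', if_neg (by simp; omega), if_neg (by simp; omega)]
          have hz2 : W ⟨2 * j.val - 1, (hidx j).2⟩ j' = 0 := by
            rw [hWval _ j' h0', if_neg (by simp; omega), if_neg (by simp; omega)]
          rw [hz1, hz2]
          ring
  have hkf := kyFan hH hk1 (by omega) W hWorth
  have hRHS : (((List.ofFn hH.eigenvalues).insertionSort (· ≥ ·)).take k).sum
      = distEigSum (pathGraph n) k := by
    rw [distEigSum, distEigList_eq]
  set j0 : Fin k := ⟨0, hk1⟩ with hj0
  have hentry : ∀ j : Fin k, (Wᴴ * D * W) j j = ∑ q, (∑ p, W p j * D p q) * W q j := by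
    intro j
    rw [Matrix.mul_apply]
    refine Finset.sum_congr rfl fun q _ => ?_
    rw [Matrix.mul_apply]
    have hct : ∀ p : Fin n, Wᴴ j p * D p q = W p j * D p q := fun p => by
      rw [Matrix.conjTranspose_apply, star_trivial]
    rw [Finset.sum_congr rfl fun p _ => hct p]
  have hcol0 : (Wᴴ * D * W) j0 j0 = r * r * ∑ p, ∑ q, D p q := by
    rw [hentry j0]
    have e1 : ∀ q : Fin n, (∑ p, W p j0 * D p q) * W q j0 = ∑ p, r * r * D p q := by
      intro q
      rw [hWval0 q j0 rfl, Finset.sum_mul]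
      refine Finset.sum_congr rfl fun p _ => ?_
      rw [hWval0 p j0 rfl]; ring
    rw [Finset.sum_congr rfl fun q _ => e1 q]
    simp only [← Finset.mul_sum]
    rw [Finset.sum_comm]
  have hcolj : ∀ j : Fin k, j.val ≠ 0 → (Wᴴ * D * W) j j = -1 := by
    intro j hj
    rw [hentry j]
    have e1 : ∀ q : Fin n, (∑ p, W p j * D p q) * W q j
        = W q j * (s * D ⟨2*j.val-2,(hidx j).1⟩ q - s * D ⟨2*j.val-1,(hidx j).2⟩ q) := by
      intro q
      rw [hdec j hj (fun p => D p q)]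
      ring
    rw [Finset.sum_congr rfl fun q _ => e1 q,
      hdec j hj (fun q => s * D ⟨2*j.val-2,(hidx j).1⟩ q - s * D ⟨2*j.val-1,(hidx j).2⟩ q)]
    set a : Fin n := ⟨2*j.val-2,(hidx j).1⟩ with hav
    set b : Fin n := ⟨2*j.val-1,(hidx j).2⟩ with hbv
    have hDaa : D a a = 0 := by simp [hD, distMatrix]
    have hDbb : D b b = 0 := by simp [hD, distMatrix]
    have hsym : D b a = D a b := by simp [hD, distMatrix, SimpleGraph.dist_comm]
    have hadj : D a b = 1 := by
      have h1 : (pathGraph n).dist a b = 1 := by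
        rw [SimpleGraph.dist_eq_one_iff_adj, SimpleGraph.pathGraph_adj]
        left
        show 2*j.val-2 + 1 = 2*j.val-1
        omega
      show ((pathGraph n).dist a b : ℝ) = 1
      rw [h1]; norm_num
    rw [hDaa, hDbb, hsym, hadj]
    linear_combination (-2:ℝ) * hss
  have htr : (Wᴴ * D * W).trace
      = (Wᴴ * D * W) j0 j0 + ∑ j ∈ Finset.univ.erase j0, (Wᴴ * D * W) j j := by
    rw [Matrix.trace, ← Finset.add_sum_erase Finset.univ _ (Finset.mem_univ j0)]
    rfl
  have herase : ∑ j ∈ Finset.univ.erase j0, (Wᴴ * D * W) j j = -((k:ℝ) - 1) := by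
    have hall : ∀ j ∈ Finset.univ.erase j0, (Wᴴ * D * W) j j = -1 := by
      intro j hjm
      have hne := Finset.ne_of_mem_erase hjm
      refine hcolj j (fun hv => hne (Fin.ext ?_))
      rw [hv]
    rw [Finset.sum_congr rfl hall, Finset.sum_const,
      Finset.card_erase_of_mem (Finset.mem_univ _), Finset.card_univ, Fintype.card_fin,
      nsmul_eq_mul, Nat.cast_sub hk1]
    push_cast
    ring
  have hWiener : ((n:ℝ)^3 - (n:ℝ))/3 ≤ ∑ p, ∑ q, D p q := by
    have hnat : ∀ p q : Fin n, ((Nat.dist p.val q.val : ℕ) : ℝ) ≤ D p q := by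
      intro p q
      show _ ≤ ((pathGraph n).dist p q : ℝ)
      exact_mod_cast natdist_le_pathdist p q
    have h1 : ∑ p : Fin n, ∑ q : Fin n, ((Nat.dist p.val q.val : ℕ):ℝ) ≤ ∑ p, ∑ q, D p q :=
      Finset.sum_le_sum fun p _ => Finset.sum_le_sum fun q _ => hnat p q
    have h2 : ∑ p : Fin n, ∑ q : Fin n, ((Nat.dist p.val q.val : ℕ):ℝ)
        = ∑ i ∈ range n, ∑ j ∈ range n, ((Nat.dist i j : ℕ):ℝ) := by
      have hin : ∀ p : Fin n, ∑ q : Fin n, ((Nat.dist p.val q.val : ℕ):ℝ)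
          = ∑ j ∈ range n, ((Nat.dist p.val j : ℕ):ℝ) :=
        fun p => Fin.sum_univ_eq_sum_range (fun j => ((Nat.dist p.val j : ℕ):ℝ)) n
      rw [Finset.sum_congr rfl fun p _ => hin p]
      exact Fin.sum_univ_eq_sum_range (fun i => ∑ j ∈ range n, ((Nat.dist i j : ℕ):ℝ)) n
    have h3 : (3:ℝ) * (∑ i ∈ range n, ∑ j ∈ range n, ((Nat.dist i j : ℕ):ℝ)) + n = (n:ℝ)^3 := by
      exact_mod_cast natdist_sum n
    linarith [h1, h2 ▸ h1]
  have hcol0ge : ((n:ℝ)^2 - 1)/3 ≤ (Wᴴ * D * W) j0 j0 := by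
    rw [hcol0, hrr]
    have hn' : (0:ℝ) < n := by exact_mod_cast hn
    calc ((n:ℝ)^2 - 1)/3 = (n:ℝ)⁻¹ * (((n:ℝ)^3 - n)/3) := by field_simp
      _ ≤ (n:ℝ)⁻¹ * ∑ p, ∑ q, D p q :=
          mul_le_mul_of_nonneg_left hWiener (by positivity)
  rw [hRHS] at hkf
  have htrge : ((n:ℝ)^2 - 1)/3 - ((k:ℝ)-1) ≤ (Wᴴ * D * W).trace := by
    rw [htr, herase]
    linarith [hcol0ge]
  linarith [htrge, hkf]


end Aux

theorem sum_k_largest_distance_eigenvalues_lt_path :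
    ∀ k : ℕ, 2 ≤ k → ∃ N : ℕ, ∀ n : ℕ, N ≤ n →
      ∀ G : SimpleGraph (Fin n), G.Connected →
        (G.diam : ℝ) < 2 * (n : ℝ) / (3 * ((k : ℝ) + 2)) →
        distEigSum G k < distEigSum (pathGraph n) k := by
  intro k hk
  refine ⟨3 * (k + 2)^2, fun n hn G hG hdiam => ?_⟩
  have hk1 : 1 ≤ k := by omega
  have hNbig : 2 * k ≤ 3 * (k + 2)^2 := by nlinarith
  have h2kn : 2 * k ≤ n := le_trans hNbig hn
  have hkn : k ≤ n := by omega
  have hub := distEigSum_le_sqrt G hG hk1 hkn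
  have hlb := path_lower hk1 h2kn
  have hknR : (2:ℝ) ≤ (k:ℝ) := by exact_mod_cast hk
  have hnR : (3:ℝ) * ((k:ℝ)+2)^2 ≤ (n:ℝ) := by exact_mod_cast hn
  have hnpos : (0:ℝ) < (n:ℝ) := by nlinarith
  have hsqrtk : Real.sqrt k ≤ ((k:ℝ)+1)/2 := by
    rw [show ((k:ℝ)+1)/2 = Real.sqrt ((((k:ℝ)+1)/2)^2) from (Real.sqrt_sq (by positivity)).symm]
    apply Real.sqrt_le_sqrt
    nlinarith
  have hsqpos : (0:ℝ) < Real.sqrt k :=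
    Real.sqrt_pos.mpr (by positivity)
  have hstrict : Real.sqrt k * ((n:ℝ) * (G.diam : ℝ))
      < Real.sqrt k * ((n:ℝ) * (2*(n:ℝ)/(3*((k:ℝ)+2)))) := by
    apply mul_lt_mul_of_pos_left _ hsqpos
    exact mul_lt_mul_of_pos_left hdiam hnpos
  have hbridge : Real.sqrt k * ((n:ℝ) * (2*(n:ℝ)/(3*((k:ℝ)+2))))
      ≤ ((n:ℝ)^2-1)/3 - ((k:ℝ)-1) := by
    have h1 : Real.sqrt k * ((n:ℝ) * (2*(n:ℝ)/(3*((k:ℝ)+2))))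
        ≤ (((k:ℝ)+1)/2) * ((n:ℝ) * (2*(n:ℝ)/(3*((k:ℝ)+2)))) :=
      mul_le_mul_of_nonneg_right hsqrtk (by positivity)
    have h2 : (((k:ℝ)+1)/2) * ((n:ℝ) * (2*(n:ℝ)/(3*((k:ℝ)+2))))
        = ((k:ℝ)+1) * (n:ℝ)^2 / (3*((k:ℝ)+2)) := by
      field_simp
    have hn2 : (3*((k:ℝ)+2)^2)^2 ≤ (n:ℝ)^2 := by nlinarith
    have h3 : ((k:ℝ)+1) * (n:ℝ)^2 / (3*((k:ℝ)+2)) ≤ ((n:ℝ)^2-1)/3 - ((k:ℝ)-1) := by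
      rw [div_le_iff₀ (by positivity)]
      nlinarith [hn2, hknR]
    linarith [h1, h2 ▸ h3]
  calc distEigSum G k ≤ Real.sqrt k * ((n:ℝ) * (G.diam : ℝ)) := hub
    _ < Real.sqrt k * ((n:ℝ) * (2*(n:ℝ)/(3*((k:ℝ)+2)))) := hstrict
    _ ≤ ((n:ℝ)^2-1)/3 - ((k:ℝ)-1) := hbridge
    _ ≤ distEigSum (pathGraph n) k := hlb
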